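/- Let be a real symmetric positive definite d×d matrix, β ≥ 0 a real number, and x⋆, x, θ⋆, θ̃, θ̂ ∈ ℝ^d vectors such that xᵀθ̂ ≥ (x⋆)ᵀθ⋆, ‖θ̂ − θ̃‖_Â ≤ β, and ‖θ̃ − θ⋆‖_Â ≤ β. Then (x⋆ − x)ᵀθ⋆ ≤ 2β · √(xᵀÂ⁻¹x). -/

import Mathlib

open Matrix

lemma symA {d : ℕ} {A : Matrix (Fin d) (Fin d) ℝ} (hA : A.IsHermitian) (u w : Fin d → ℝ) :
    u ⬝ᵥ A *ᵥ w = w ⬝ᵥ A *ᵥ u := by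
  have ht : Aᵀ = A := by
    have := hA.eq
    simpa [conjTranspose_eq_transpose_of_trivial] using this
  rw [dotProduct_mulVec, ← mulVec_transpose, ht, dotProduct_comm]

lemma cs {d : ℕ} {A : Matrix (Fin d) (Fin d) ℝ} (hA : A.PosDef) (u w : Fin d → ℝ) :
    (u ⬝ᵥ A *ᵥ w)^2 ≤ (u ⬝ᵥ A *ᵥ u) * (w ⬝ᵥ A *ᵥ w) := by
  have hnn : ∀ v : Fin d → ℝ, 0 ≤ v ⬝ᵥ A *ᵥ v := by
    intro v; simpa using hA.posSemidef.dotProduct_mulVec_nonneg v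
  by_cases hw : w = 0
  · simp [hw]
  · have hb : 0 < w ⬝ᵥ A *ᵥ w := by simpa using hA.dotProduct_mulVec_pos hw
    set c := u ⬝ᵥ A *ᵥ w
    have key := hnn (u - (c / (w ⬝ᵥ A *ᵥ w)) • w)
    have expand : (u - (c / (w ⬝ᵥ A *ᵥ w)) • w) ⬝ᵥ A *ᵥ (u - (c / (w ⬝ᵥ A *ᵥ w)) • w)
        = u ⬝ᵥ A *ᵥ u - c^2 / (w ⬝ᵥ A *ᵥ w) := by
      rw [sub_dotProduct, mulVec_sub, dotProduct_sub, dotProduct_sub,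
        smul_dotProduct, mulVec_smul, dotProduct_smul, dotProduct_smul,
        smul_dotProduct, symA hA.1 w u]
      field_simp [c, hb.ne']
      rw [show u ⬝ᵥ A *ᵥ w = c from rfl]
      linear_combination (c ^ 2 * ((w ⬝ᵥ A *ᵥ w) * (w ⬝ᵥ A *ᵥ w)⁻¹ - 1)) * mul_inv_cancel₀ hb.ne'
    rw [expand] at key
    have := (div_le_iff₀ hb).mp (by linarith : c^2 / (w ⬝ᵥ A *ᵥ w) ≤ u ⬝ᵥ A *ᵥ u)
    linarith

lemma dot_le_sqrt {d : ℕ} {A : Matrix (Fin d) (Fin d) ℝ} (hA : A.PosDef)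
    (x v : Fin d → ℝ) :
    x ⬝ᵥ v ≤ Real.sqrt (x ⬝ᵥ A⁻¹ *ᵥ x) * Real.sqrt (v ⬝ᵥ A *ᵥ v) := by
  have hdet : IsUnit A.det := isUnit_iff_ne_zero.mpr hA.det_pos.ne'
  have ht : Aᵀ = A := by
    have := hA.1.eq
    simpa [conjTranspose_eq_transpose_of_trivial] using this
  set u := A⁻¹ *ᵥ x with hu
  have hAu : A *ᵥ u = x := by
    rw [hu, mulVec_mulVec, mul_nonsing_inv A hdet, one_mulVec]
  have h1 : u ⬝ᵥ A *ᵥ v = x ⬝ᵥ v := by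
    rw [symA hA.1, hAu, dotProduct_comm]
  have h2 : u ⬝ᵥ A *ᵥ u = x ⬝ᵥ A⁻¹ *ᵥ x := by
    rw [hAu, dotProduct_comm]
  have hcs := cs hA u v
  rw [h1, h2] at hcs
  calc x ⬝ᵥ v ≤ |x ⬝ᵥ v| := le_abs_self _
    _ = Real.sqrt ((x ⬝ᵥ v)^2) := (Real.sqrt_sq_eq_abs _).symm
    _ ≤ Real.sqrt ((x ⬝ᵥ A⁻¹ *ᵥ x) * (v ⬝ᵥ A *ᵥ v)) := Real.sqrt_le_sqrt hcs
    _ = _ := Real.sqrt_mul (by simpa using hA.inv.posSemidef.dotProduct_mulVec_nonneg x) _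

/-- **Instantaneous regret bound for optimistic linear bandits.**  If `Â` is symmetric
positive definite, the optimistic value satisfies `xᵀθ̂ ≥ (x⋆)ᵀθ⋆`, and both
`‖θ̂ − θ̃‖_Â ≤ β` and `‖θ̃ − θ⋆‖_Â ≤ β`, then
`(x⋆ − x)ᵀθ⋆ ≤ 2β·√(xᵀÂ⁻¹x)`. -/
theorem instantaneous_regret {d : ℕ} (Ahat : Matrix (Fin d) (Fin d) ℝ)
    (hA : Ahat.PosDef) (β : ℝ) (hβ : 0 ≤ β)
    (xstar x θstar θtilde θhat : Fin d → ℝ)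
    (hopt : x ⬝ᵥ θhat ≥ xstar ⬝ᵥ θstar)
    (h1 : Real.sqrt ((θhat - θtilde) ⬝ᵥ (Ahat *ᵥ (θhat - θtilde))) ≤ β)
    (h2 : Real.sqrt ((θtilde - θstar) ⬝ᵥ (Ahat *ᵥ (θtilde - θstar))) ≤ β) :
    (xstar - x) ⬝ᵥ θstar ≤ 2 * β * Real.sqrt (x ⬝ᵥ (Ahat⁻¹ *ᵥ x)) := by
  set s := Real.sqrt (x ⬝ᵥ (Ahat⁻¹ *ᵥ x)) with hs
  have hs0 : 0 ≤ s := Real.sqrt_nonneg _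
  have b1 : x ⬝ᵥ (θhat - θtilde) ≤ s * β :=
    (dot_le_sqrt hA x _).trans (mul_le_mul_of_nonneg_left h1 hs0)
  have b2 : x ⬝ᵥ (θtilde - θstar) ≤ s * β :=
    (dot_le_sqrt hA x _).trans (mul_le_mul_of_nonneg_left h2 hs0)
  have e1 : x ⬝ᵥ (θhat - θtilde) = x ⬝ᵥ θhat - x ⬝ᵥ θtilde := dotProduct_sub x _ _
  have e2 : x ⬝ᵥ (θtilde - θstar) = x ⬝ᵥ θtilde - x ⬝ᵥ θstar := dotProduct_sub x _ _
  have e3 : (xstar - x) ⬝ᵥ θstar = xstar ⬝ᵥ θstar - x ⬝ᵥ θstar := sub_dotProduct _ _ _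
  rw [e3]
  rw [e1] at b1; rw [e2] at b2
  nlinarith [hopt]
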